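/- Let Φ = C_n, D ⊆ Φ⁺ orthogonal with 2ε_1 ∈ D, and σ = ∏_{β∈D} r_β. Then every positive root with nonzero first coordinate is sent to a negative root by σ; i.e., C_1 = {ε_1 ± ε_l : 1 < l ≤ n} ∪ {2ε_1} ⊆ Φ_σ, and |C_1| = 2n − 1. -/

import Mathlib

/-- The standard basis vector `ε_i` of `ℝ^n` (indices are 1-based, ambient type `ℕ → ℝ`). -/
noncomputable def eps (i : ℕ) : ℕ → ℝ := fun k => if k = i then 1 else 0

/-- The standard inner product on vectors supported on indices `0, …, n`. -/
noncomputable def ip (n : ℕ) (x y : ℕ → ℝ) : ℝ := ∑ k ∈ Finset.range (n + 1), x k * y k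

/-- Positive roots of `B_n`: `ε_i ± ε_j` for `1 ≤ i < j ≤ n` and `ε_i` for `1 ≤ i ≤ n`. -/
def PosB (n : ℕ) : Set (ℕ → ℝ) :=
  {v | ∃ i j : ℕ, 1 ≤ i ∧ i < j ∧ j ≤ n ∧ (v = eps i - eps j ∨ v = eps i + eps j)} ∪
  {v | ∃ i : ℕ, 1 ≤ i ∧ i ≤ n ∧ v = eps i}

/-- Positive roots of `C_n`: `ε_i ± ε_j` for `1 ≤ i < j ≤ n` and `2ε_i` for `1 ≤ i ≤ n`. -/
def PosC (n : ℕ) : Set (ℕ → ℝ) :=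
  {v | ∃ i j : ℕ, 1 ≤ i ∧ i < j ∧ j ≤ n ∧ (v = eps i - eps j ∨ v = eps i + eps j)} ∪
  {v | ∃ i : ℕ, 1 ≤ i ∧ i ≤ n ∧ v = (2 : ℝ) • eps i}

/-- Positive roots of `D_n`: `ε_i ± ε_j` for `1 ≤ i < j ≤ n`. -/
def PosD (n : ℕ) : Set (ℕ → ℝ) :=
  {v | ∃ i j : ℕ, 1 ≤ i ∧ i < j ∧ j ≤ n ∧ (v = eps i - eps j ∨ v = eps i + eps j)}

/-- The reflection `r_a(x) = x - (2(x,a)/(a,a)) a`. -/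
noncomputable def rfl' (n : ℕ) (a : ℕ → ℝ) : Function.End (ℕ → ℝ) :=
  fun x => x - (2 * ip n x a / ip n a a) • a


lemma ip_eps_right (n i : ℕ) (hi : i ≤ n) (x : ℕ → ℝ) : ip n x (eps i) = x i := by
  unfold ip eps
  rw [Finset.sum_eq_single i]
  · simp
  · intro b _ hb; simp [hb]
  · intro h; exact absurd (Finset.mem_range.2 (Nat.lt_succ_of_le hi)) h

lemma ip_sub_right (n : ℕ) (x y z : ℕ → ℝ) : ip n x (y - z) = ip n x y - ip n x z := by
  simp [ip, mul_sub, Finset.sum_sub_distrib]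

lemma ip_add_right (n : ℕ) (x y z : ℕ → ℝ) : ip n x (y + z) = ip n x y + ip n x z := by
  simp [ip, mul_add, Finset.sum_add_distrib]

lemma ip_smul_left (n : ℕ) (c : ℝ) (x y : ℕ → ℝ) : ip n (c • x) y = c * ip n x y := by
  unfold ip
  rw [Finset.mul_sum]
  refine Finset.sum_congr rfl fun k _ => ?_
  simp [mul_assoc]

lemma ip_smul_right (n : ℕ) (c : ℝ) (x y : ℕ → ℝ) : ip n x (c • y) = c * ip n x y := by
  unfold ip
  rw [Finset.mul_sum]
  refine Finset.sum_congr rfl fun k _ => ?_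
  simp [mul_comm, mul_assoc, mul_left_comm]

-- pointwise form of reflection in eps i - eps j
lemma rfl_sub_apply (n i j : ℕ) (hi : i ≤ n) (hj : j ≤ n) (hij : i ≠ j) (x : ℕ → ℝ) :
    rfl' n (eps i - eps j) x = fun m => if m = i then x j else if m = j then x i else x m := by
  have h1 : ip n x (eps i - eps j) = x i - x j := by
    rw [ip_sub_right, ip_eps_right n i hi, ip_eps_right n j hj]
  have h2 : ip n (eps i - eps j) (eps i - eps j) = 2 := by
    rw [ip_sub_right, ip_eps_right n i hi, ip_eps_right n j hj]
    simp [eps, hij, Ne.symm hij]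
    norm_num
  funext m
  simp only [rfl', h1, h2, Pi.sub_apply, Pi.smul_apply, smul_eq_mul, eps]
  split_ifs <;> (try subst_vars) <;> first | (exfalso; omega) | ring

lemma rfl_add_apply (n i j : ℕ) (hi : i ≤ n) (hj : j ≤ n) (hij : i ≠ j) (x : ℕ → ℝ) :
    rfl' n (eps i + eps j) x = fun m => if m = i then -(x j) else if m = j then -(x i) else x m := by
  have h1 : ip n x (eps i + eps j) = x i + x j := by
    rw [ip_add_right, ip_eps_right n i hi, ip_eps_right n j hj]
  have h2 : ip n (eps i + eps j) (eps i + eps j) = 2 := by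
    rw [ip_add_right, ip_eps_right n i hi, ip_eps_right n j hj]
    simp [eps, hij, Ne.symm hij]
    norm_num
  funext m
  simp only [rfl', h1, h2, Pi.sub_apply, Pi.add_apply, Pi.smul_apply, smul_eq_mul, eps]
  split_ifs <;> (try subst_vars) <;> first | (exfalso; omega) | ring

lemma rfl_two_apply (n i : ℕ) (hi : i ≤ n) (x : ℕ → ℝ) :
    rfl' n ((2:ℝ) • eps i) x = fun m => if m = i then -(x i) else x m := by
  have h1 : ip n x ((2:ℝ) • eps i) = 2 * x i := by
    rw [ip_smul_right, ip_eps_right n i hi]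
  have h2 : ip n ((2:ℝ) • eps i) ((2:ℝ) • eps i) = 4 := by
    rw [ip_smul_right, ip_smul_left, ip_eps_right n i hi]
    simp [eps]
    norm_num
  funext m
  simp only [rfl', h1, h2, Pi.sub_apply, Pi.smul_apply, smul_eq_mul, eps]
  split_ifs <;> (try subst_vars) <;> ring


def Phi (n : ℕ) : Set (ℕ → ℝ) :=
  {v | ∃ p q : ℕ, ∃ s t : ℝ, (1 ≤ p ∧ p ≤ n) ∧ (1 ≤ q ∧ q ≤ n) ∧ p ≠ q ∧
      (s = 1 ∨ s = -1) ∧ (t = 1 ∨ t = -1) ∧ v = s • eps p + t • eps q} ∪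
  {v | ∃ p : ℕ, ∃ s : ℝ, (1 ≤ p ∧ p ≤ n) ∧ (s = 2 ∨ s = -2) ∧ v = s • eps p}

lemma posC_subset_Phi (n : ℕ) : PosC n ⊆ Phi n := by
  rintro v (⟨i, j, hi, hij, hjn, (rfl | rfl)⟩ | ⟨i, hi, hin, rfl⟩)
  · exact Or.inl ⟨i, j, 1, -1, ⟨hi, by omega⟩, ⟨by omega, hjn⟩, by omega,
      Or.inl rfl, Or.inr rfl, by module⟩
  · exact Or.inl ⟨i, j, 1, 1, ⟨hi, by omega⟩, ⟨by omega, hjn⟩, by omega,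
      Or.inl rfl, Or.inl rfl, by module⟩
  · exact Or.inr ⟨i, 2, ⟨hi, hin⟩, Or.inl rfl, rfl⟩

set_option maxHeartbeats 1600000 in
lemma S_mem (n i j : ℕ) (hi1 : 1 ≤ i) (hin : i ≤ n) (hj1 : 1 ≤ j) (hjn : j ≤ n)
    (x : ℕ → ℝ) (hx : x ∈ Phi n) :
    (fun m => if m = i then x j else if m = j then x i else x m) ∈ Phi n := by
  rcases hx with ⟨p, q, s, t, ⟨hp1, hpn⟩, ⟨hq1, hqn⟩, hpq, hs, ht, rfl⟩ | ⟨p, s, ⟨hp1, hpn⟩, hs, rfl⟩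
  · refine Or.inl ⟨if p = i then j else if p = j then i else p,
      if q = i then j else if q = j then i else q, s, t, ?_, ?_, ?_, hs, ht, ?_⟩
    · split_ifs <;> omega
    · split_ifs <;> omega
    · split_ifs <;> omega
    · funext m
      simp only [Pi.add_apply, Pi.smul_apply, smul_eq_mul, eps]
      split_ifs <;> (try subst_vars) <;> first | (exfalso; omega) | ring
  · refine Or.inr ⟨if p = i then j else if p = j then i else p, s, ?_, hs, ?_⟩
    · split_ifs <;> omega
    · funext m
      simp only [Pi.smul_apply, smul_eq_mul, eps]
      split_ifs <;> (try subst_vars) <;> first | (exfalso; omega) | ring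

set_option maxHeartbeats 1600000 in
lemma F_mem (n i j : ℕ) (hi1 : 1 ≤ i) (hin : i ≤ n) (hj1 : 1 ≤ j) (hjn : j ≤ n)
    (x : ℕ → ℝ) (hx : x ∈ Phi n) :
    (fun m => if m = i then -(x j) else if m = j then -(x i) else x m) ∈ Phi n := by
  rcases hx with ⟨p, q, s, t, ⟨hp1, hpn⟩, ⟨hq1, hqn⟩, hpq, hs, ht, rfl⟩ | ⟨p, s, ⟨hp1, hpn⟩, hs, rfl⟩
  · refine Or.inl ⟨if p = i then j else if p = j then i else p,
      if q = i then j else if q = j then i else q,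
      (if p = i ∨ p = j then -s else s), (if q = i ∨ q = j then -t else t), ?_, ?_, ?_, ?_, ?_, ?_⟩
    · split_ifs <;> omega
    · split_ifs <;> omega
    · split_ifs <;> omega
    · rcases hs with rfl | rfl <;> split_ifs <;> simp
    · rcases ht with rfl | rfl <;> split_ifs <;> simp
    · funext m
      simp only [Pi.add_apply, Pi.smul_apply, smul_eq_mul, eps]
      split_ifs <;> (try subst_vars) <;> first | (exfalso; omega) | ring
  · refine Or.inr ⟨if p = i then j else if p = j then i else p,
      (if p = i ∨ p = j then -s else s), ?_, ?_, ?_⟩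
    · split_ifs <;> omega
    · rcases hs with rfl | rfl <;> split_ifs <;> simp
    · funext m
      simp only [Pi.smul_apply, smul_eq_mul, eps]
      split_ifs <;> (try subst_vars) <;> first | (exfalso; omega) | ring

lemma rfl_mem_Phi (n : ℕ) (a x : ℕ → ℝ) (ha : a ∈ PosC n) (hx : x ∈ Phi n) :
    rfl' n a x ∈ Phi n := by
  rcases ha with ⟨i, j, hi, hij, hjn, (rfl | rfl)⟩ | ⟨i, hi, hin, rfl⟩
  · rw [rfl_sub_apply n i j (by omega) hjn (by omega)]
    exact S_mem n i j hi (by omega) (by omega) hjn x hx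
  · rw [rfl_add_apply n i j (by omega) hjn (by omega)]
    exact F_mem n i j hi (by omega) (by omega) hjn x hx
  · rw [rfl_two_apply n i hin]
    have h := F_mem n i i hi hin hi hin x hx
    have he : (fun m => if m = i then -(x i) else if m = i then -(x i) else x m)
        = (fun m => if m = i then -(x i) else x m) := by
      funext m; split_ifs <;> rfl
    rwa [he] at h

lemma rfl_coord1_eq (n : ℕ) (β : ℕ → ℝ) (hβ1 : β 1 = 0) (x : ℕ → ℝ) :
    (rfl' n β x) 1 = x 1 := by
  simp [rfl', hβ1]

lemma rfl_two_coord1 (n : ℕ) (hn : 1 ≤ n) (x : ℕ → ℝ) :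
    (rfl' n ((2:ℝ) • eps 1) x) 1 = -(x 1) := by
  rw [rfl_two_apply n 1 hn]
  simp

lemma prod_mem_Phi (n : ℕ) (M : List (ℕ → ℝ)) (hM : ∀ β ∈ M, β ∈ PosC n) (x : ℕ → ℝ)
    (hx : x ∈ Phi n) : (M.map (rfl' n)).prod x ∈ Phi n := by
  induction M with
  | nil => exact hx
  | cons β M ih =>
    simp only [List.map_cons, List.prod_cons]
    have h : (rfl' n β * (M.map (rfl' n)).prod) x
        = rfl' n β ((M.map (rfl' n)).prod x) := rfl
    rw [h]
    exact rfl_mem_Phi n β _ (hM β (by simp)) (ih (fun b hb => hM b (by simp [hb])))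

lemma prod_coord1_fix (n : ℕ) (M : List (ℕ → ℝ)) (hM : ∀ β ∈ M, β 1 = 0) (x : ℕ → ℝ) :
    ((M.map (rfl' n)).prod x) 1 = x 1 := by
  induction M with
  | nil => rfl
  | cons β M ih =>
    simp only [List.map_cons, List.prod_cons]
    have h : (rfl' n β * (M.map (rfl' n)).prod) x
        = rfl' n β ((M.map (rfl' n)).prod x) := rfl
    rw [h, rfl_coord1_eq n β (hM β (by simp))]
    exact ih (fun b hb => hM b (by simp [hb]))

lemma prod_coord1_neg (n : ℕ) (hn : 1 ≤ n) (M : List (ℕ → ℝ)) (hnd : M.Nodup)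
    (hmem : (2:ℝ) • eps 1 ∈ M) (hM : ∀ β ∈ M, β = (2:ℝ) • eps 1 ∨ β 1 = 0) (x : ℕ → ℝ) :
    ((M.map (rfl' n)).prod x) 1 = -(x 1) := by
  induction M with
  | nil => simp at hmem
  | cons β M ih =>
    simp only [List.map_cons, List.prod_cons]
    have h : (rfl' n β * (M.map (rfl' n)).prod) x
        = rfl' n β ((M.map (rfl' n)).prod x) := rfl
    rw [h]
    rcases hM β (by simp) with rfl | h0
    · rw [rfl_two_coord1 n hn]
      have hβM : (2:ℝ) • eps 1 ∉ M := (List.nodup_cons.1 hnd).1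
      have : ∀ b ∈ M, b 1 = 0 := by
        intro b hb
        rcases hM b (by simp [hb]) with rfl | h0
        · exact absurd hb hβM
        · exact h0
      rw [prod_coord1_fix n M this]
    · have hβne : β ≠ (2:ℝ) • eps 1 := by
        intro he
        rw [he] at h0
        simp [eps] at h0
      have hmem' : (2:ℝ) • eps 1 ∈ M := by
        rcases List.mem_cons.1 hmem with he | hm
        · exact absurd he.symm hβne
        · exact hm
      rw [rfl_coord1_eq n β h0]
      exact ih (List.nodup_cons.1 hnd).2 hmem' (fun b hb => hM b (by simp [hb]))

lemma posC_coord1 (n : ℕ) (α : ℕ → ℝ) (hα : α ∈ PosC n) :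
    α 1 = 0 ∨ α 1 = 1 ∨ α 1 = 2 := by
  rcases hα with ⟨i, j, hi, hij, hjn, (rfl | rfl)⟩ | ⟨i, hi, hin, rfl⟩
  · have hj : (1:ℕ) ≠ j := by omega
    by_cases h : (1:ℕ) = i
    · subst h; simp [eps, hj]
    · simp [eps, h, hj]
  · have hj : (1:ℕ) ≠ j := by omega
    by_cases h : (1:ℕ) = i
    · subst h; simp [eps, hj]
    · simp [eps, h, hj]
  · by_cases h : (1:ℕ) = i
    · subst h; simp [eps]
    · simp [eps, h]

lemma Phi_neg_posC (n : ℕ) (v : ℕ → ℝ) (hv : v ∈ Phi n) (h : v 1 < 0) : -v ∈ PosC n := by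
  rcases hv with ⟨p, q, s, t, ⟨hp1, hpn⟩, ⟨hq1, hqn⟩, hpq, hs, ht, rfl⟩ | ⟨p, s, ⟨hp1, hpn⟩, hs, rfl⟩
  · by_cases hp : p = 1
    · subst hp
      have hq : q ≠ 1 := fun hq => hpq hq.symm
      have hv1 : s = (s • eps 1 + t • eps q) 1 := by simp [eps, Ne.symm hq]
      have hs1 : s = -1 := by
        rcases hs with rfl | rfl
        · exfalso; rw [← hv1] at h; norm_num at h
        · rfl
      subst hs1
      rcases ht with rfl | rfl
      · exact Or.inl ⟨1, q, le_refl 1, by omega, hqn, Or.inl (by module)⟩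
      · exact Or.inl ⟨1, q, le_refl 1, by omega, hqn, Or.inr (by module)⟩
    · by_cases hq : q = 1
      · subst hq
        have hv1 : t = (s • eps p + t • eps 1) 1 := by simp [eps, Ne.symm hp]
        have ht1 : t = -1 := by
          rcases ht with rfl | rfl
          · exfalso; rw [← hv1] at h; norm_num at h
          · rfl
        subst ht1
        rcases hs with rfl | rfl
        · exact Or.inl ⟨1, p, le_refl 1, by omega, hpn, Or.inl (by module)⟩
        · exact Or.inl ⟨1, p, le_refl 1, by omega, hpn, Or.inr (by module)⟩
      · exfalso
        have : (s • eps p + t • eps q) 1 = 0 := by simp [eps, Ne.symm hp, Ne.symm hq]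
        rw [this] at h; exact lt_irrefl 0 h
  · by_cases hp : p = 1
    · subst hp
      have hv1 : s = (s • eps 1) 1 := by simp [eps]
      have hs1 : s = -2 := by
        rcases hs with rfl | rfl
        · exfalso; rw [← hv1] at h; norm_num at h
        · rfl
      subst hs1
      exact Or.inr ⟨1, le_refl 1, hpn, by module⟩
    · exfalso
      have : (s • eps p) 1 = 0 := by simp [eps, Ne.symm hp]
      rw [this] at h; exact lt_irrefl 0 h

lemma eps_inj : Function.Injective eps := by
  intro a b h
  by_contra hne
  have := congrFun h a
  simp [eps, hne] at this

open Classical in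
lemma card_lemma (n : ℕ) (hn : 1 ≤ n) :
    Set.ncard {α ∈ PosC n | α 1 ≠ 0} = 2 * n - 1 := by
  classical
  set c : ℕ → ℝ := (2:ℝ) • eps 1 with hc
  set S : Finset (ℕ → ℝ) := ((Finset.Icc 2 n).image (fun l => eps 1 - eps l)) ∪
      (((Finset.Icc 2 n).image (fun l => eps 1 + eps l)) ∪ {c}) with hS
  have hset : {α ∈ PosC n | α 1 ≠ 0} = ↑S := by
    ext α
    constructor
    · rintro ⟨hα, h1⟩
      rcases hα with ⟨i, j, hi, hij, hjn, (rfl | rfl)⟩ | ⟨i, hi, hin, rfl⟩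
      · have hi1 : i = 1 := by
          by_contra hne
          apply h1
          simp [eps, show (1:ℕ) ≠ i from fun h => hne h.symm, show (1:ℕ) ≠ j from by omega]
        subst hi1
        simp only [S, Finset.coe_union, Set.mem_union, Finset.coe_image, Set.mem_image]
        exact Or.inl ⟨j, by simp [Finset.mem_Icc]; omega, rfl⟩
      · have hi1 : i = 1 := by
          by_contra hne
          apply h1
          simp [eps, show (1:ℕ) ≠ i from fun h => hne h.symm, show (1:ℕ) ≠ j from by omega]
        subst hi1
        simp only [S, Finset.coe_union, Set.mem_union, Finset.coe_image, Set.mem_image]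
        exact Or.inr (Or.inl ⟨j, by simp [Finset.mem_Icc]; omega, rfl⟩)
      · have hi1 : i = 1 := by
          by_contra hne
          apply h1
          simp [eps, show (1:ℕ) ≠ i from fun h => hne h.symm]
        subst hi1
        simp only [S, Finset.coe_union, Set.mem_union]
        exact Or.inr (Or.inr (by simp [c]))
    · intro hα
      simp only [S, Finset.coe_union, Set.mem_union, Finset.coe_image, Set.mem_image,
        Finset.mem_coe, Finset.mem_image, Finset.mem_singleton, Finset.coe_singleton,
        Set.mem_singleton_iff, Finset.mem_Icc] at hα
      rcases hα with ⟨l, ⟨hl2, hln⟩, rfl⟩ | ⟨l, ⟨hl2, hln⟩, rfl⟩ | rfl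
      · refine ⟨Or.inl ⟨1, l, le_refl 1, by omega, hln, Or.inl rfl⟩, ?_⟩
        simp [eps, show (1:ℕ) ≠ l from by omega]
      · refine ⟨Or.inl ⟨1, l, le_refl 1, by omega, hln, Or.inr rfl⟩, ?_⟩
        simp [eps, show (1:ℕ) ≠ l from by omega]
      · refine ⟨Or.inr ⟨1, le_refl 1, hn, rfl⟩, ?_⟩
        simp [c, eps]
  rw [hset, Set.ncard_coe_finset]
  have hinj1 : Function.Injective (fun l => eps 1 - eps l) := by
    intro a b h
    exact eps_inj (by simpa [sub_right_inj] using h)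
  have hinj2 : Function.Injective (fun l => eps 1 + eps l) := by
    intro a b h
    exact eps_inj (by simpa [add_right_inj] using h)
  have hd12 : Disjoint ((Finset.Icc 2 n).image (fun l => eps 1 - eps l))
      ((Finset.Icc 2 n).image (fun l => eps 1 + eps l)) := by
    rw [Finset.disjoint_left]
    rintro a ha hb
    obtain ⟨l, hl, rfl⟩ := Finset.mem_image.1 ha
    obtain ⟨l', hl', heq⟩ := Finset.mem_image.1 hb
    rw [Finset.mem_Icc] at hl hl'
    have := congrFun heq l'
    simp [eps, show l' ≠ 1 from by omega] at this
    split_ifs at this <;> norm_num at this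
  have hd1c : Disjoint ((Finset.Icc 2 n).image (fun l => eps 1 - eps l)) ({c} : Finset (ℕ → ℝ)) := by
    rw [Finset.disjoint_right]
    rintro a ha hb
    rw [Finset.mem_singleton] at ha
    obtain ⟨l, hl, heq⟩ := Finset.mem_image.1 hb
    rw [Finset.mem_Icc] at hl
    have := congrFun (ha ▸ heq) 1
    simp [c, eps, show (1:ℕ) ≠ l from by omega] at this
  have hd2c : Disjoint ((Finset.Icc 2 n).image (fun l => eps 1 + eps l)) ({c} : Finset (ℕ → ℝ)) := by
    rw [Finset.disjoint_right]
    rintro a ha hb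
    rw [Finset.mem_singleton] at ha
    obtain ⟨l, hl, heq⟩ := Finset.mem_image.1 hb
    rw [Finset.mem_Icc] at hl
    have := congrFun (ha ▸ heq) 1
    simp [c, eps, show (1:ℕ) ≠ l from by omega] at this
  rw [hS]
  rw [Finset.card_union_of_disjoint (by
    rw [Finset.disjoint_union_right]
    exact ⟨hd12, hd1c⟩)]
  rw [Finset.card_union_of_disjoint hd2c]
  rw [Finset.card_image_of_injective _ hinj1, Finset.card_image_of_injective _ hinj2]
  rw [Nat.card_Icc]
  simp
  omega


open Classical in
/-- Let `Φ = C_n`, `D ⊆ Φ⁺` orthogonal with `2ε_1 ∈ D`, and `σ = ∏_{β ∈ D} r_β`. Then every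
positive root with nonzero first coordinate (i.e. the first column `C_1`) is sent to a negative
root by `σ`, and `|C_1| = 2n - 1`. -/
theorem stmt16 (n : ℕ) (hn : 1 ≤ n)
    (D : Finset (ℕ → ℝ)) (hD : ↑D ⊆ PosC n)
    (horth : ∀ a ∈ D, ∀ b ∈ D, a ≠ b → ip n a b = 0)
    (hmem : (2 : ℝ) • eps 1 ∈ D)
    (L : List (ℕ → ℝ)) (hL : L.Nodup) (hLD : L.toFinset = D) :
    {α ∈ PosC n | α 1 ≠ 0}
        ⊆ {α ∈ PosC n | -((L.map (rfl' n)).prod α) ∈ PosC n} ∧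
    Set.ncard {α ∈ PosC n | α 1 ≠ 0} = 2 * n - 1 := by
  constructor
  · rintro α ⟨hα, hα1⟩
    refine ⟨hα, ?_⟩
    have hLpos : ∀ β ∈ L, β ∈ PosC n := fun β hβ =>
      hD (by rw [← hLD]; exact List.mem_toFinset.2 hβ)
    have hσ : (L.map (rfl' n)).prod α ∈ Phi n :=
      prod_mem_Phi n L hLpos α (posC_subset_Phi n hα)
    have hmemL : (2:ℝ) • eps 1 ∈ L := by
      rw [← hLD] at hmem; exact List.mem_toFinset.1 hmem
    have hall : ∀ β ∈ L, β = (2:ℝ) • eps 1 ∨ β 1 = 0 := by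
      intro β hβ
      by_cases hbe : β = (2:ℝ) • eps 1
      · exact Or.inl hbe
      · right
        have hip : ip n β ((2:ℝ) • eps 1) = 0 :=
          horth β (by rw [← hLD]; exact List.mem_toFinset.2 hβ) _ hmem hbe
        rw [ip_smul_right, ip_eps_right n 1 hn] at hip
        linarith
    have hcoord : ((L.map (rfl' n)).prod α) 1 = -(α 1) :=
      prod_coord1_neg n hn L hL hmemL hall α
    have hpos : 0 < α 1 := by
      rcases posC_coord1 n α hα with h | h | h
      · exact absurd h hα1
      · rw [h]; norm_num
      · rw [h]; norm_num
    exact Phi_neg_posC n _ hσ (by rw [hcoord]; linarith)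
  · exact card_lemma n hn
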